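/- arXiv:2102.10257 — 2 statements merged into one kernel-verified Lean document; each statement's English description precedes it below -/
import Mathlib

section
/- Let n ≥ 2, β > 1, μ ≥ 0, and let D ∈ C(ℝⁿ) ∩ C^δ(B_δ) for some δ > 0 be radial with 0 ≤ D(x) ≤ μ(1+|x|)^{−β}. For each λ ∈ (0,1], let f_λ be the unique C² solution of the Dirichlet problem Δf_λ − λ^{−1}D(x/λ)f_λ = f_λ on the unit ball B₁ of ℝⁿ with f_λ = 1 on ∂B₁ (so that f_λ is radial, 0 < f_λ ≤ 1, and f_λ is nondecreasing in |x|). Then there exists a constant c > 0 such that f_λ(x) ≥ c for all λ ∈ (0,1] and all x ∈ B₁; in particular, liminf_{λ→0⁺} f_λ(0) > 0. -/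
open MeasureTheory Set Real Filter
open scoped NNReal ENNReal

open intervalIntegral

noncomputable section

abbrev Eucl (n : ℕ) := EuclideanSpace ℝ (Fin n)


lemma line_hasDerivAt {n : ℕ} (x v : Eucl n) (s : ℝ) :
    HasDerivAt (fun r : ℝ => x + r • v) v s := by
  simpa using ((hasDerivAt_id s).smul_const v).const_add x

lemma second_dir {n : ℕ} (f : Eucl n → ℝ) (x v : Eucl n) (hf : ContDiffAt ℝ 2 f x) :
    HasDerivAt (fun s : ℝ => deriv (fun r : ℝ => f (x + r • v)) s)
      (fderiv ℝ (fun y => fderiv ℝ f y v) x v) 0 := by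
  have hg : DifferentiableAt ℝ (fun y => fderiv ℝ f y v) x := by
    have h1 : ContDiffAt ℝ 1 (fderiv ℝ f) x := hf.fderiv_right le_rfl
    exact ((ContinuousLinearMap.apply ℝ ℝ v).differentiableAt).comp x (h1.differentiableAt (by norm_num))
  have hmain : HasDerivAt (fun s : ℝ => fderiv ℝ f (x + s • v) v)
      (fderiv ℝ (fun y => fderiv ℝ f y v) x v) 0 := by
    have h0 : x + (0:ℝ) • v = x := by simp
    have := (h0 ▸ hg.hasFDerivAt).comp_hasDerivAt 0 (line_hasDerivAt x v 0)
    simpa [Function.comp_def] using this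
  apply hmain.congr_of_eventuallyEq
  have hev : ∀ᶠ s : ℝ in nhds 0, ContDiffAt ℝ 2 f (x + s • v) := by
    have hc : Continuous (fun s : ℝ => x + s • v) := by continuity
    have : ∀ᶠ y in nhds (x + (0:ℝ) • v), ContDiffAt ℝ 2 f y := by
      simpa using hf.eventually (by simp)
    exact hc.continuousAt.eventually (by simpa using this)
  filter_upwards [hev] with s hs
  have hd : HasDerivAt (fun r : ℝ => f (x + r • v)) (fderiv ℝ f (x + s • v) v) s :=
    (hs.differentiableAt (by norm_num)).hasFDerivAt.comp_hasDerivAt s (line_hasDerivAt x v s)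
  exact hd.deriv

lemma lemD (u : ℝ → ℝ) (t d : ℝ) (hu : ∀ᶠ r in nhds t, DifferentiableAt ℝ u r)
    (hdu : HasDerivAt (deriv u) d t) :
    HasDerivAt (fun s : ℝ => deriv (fun r : ℝ => u (t + r)) s) d 0 := by
  have hdu' : HasDerivAt (deriv u) d (t + 0) := by rw [add_zero]; exact hdu
  have hmain : HasDerivAt (fun s : ℝ => deriv u (t + s)) d 0 := by
    have := hdu'.comp (0:ℝ) (h := fun s : ℝ => t + s)
      (by simpa using (hasDerivAt_id (0:ℝ)).const_add t)
    simpa [Function.comp_def] using this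
  apply hmain.congr_of_eventuallyEq
  have hc : ContinuousAt (fun s : ℝ => t + s) 0 := by fun_prop
  filter_upwards [hc.eventually (by simpa using hu)] with s hs
  have hd1 : HasDerivAt (fun r : ℝ => u (t + r)) (deriv u (t + s) * 1) s :=
    (hs.hasDerivAt).comp s (by simpa using (hasDerivAt_id s).const_add t)
  simpa using hd1.deriv

lemma lemC (u : ℝ → ℝ) (t : ℝ) (ht : 0 < t) (hu : ∀ᶠ r in nhds t, DifferentiableAt ℝ u r)
    (hdu : DifferentiableAt ℝ (deriv u) t) :
    HasDerivAt (fun s : ℝ => deriv (fun r : ℝ => u (Real.sqrt (t^2 + r^2))) s)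
      (deriv u t / t) 0 := by
  set r : ℝ → ℝ := fun s => Real.sqrt (t^2 + s^2) with hrdef
  have hpos : ∀ s : ℝ, 0 < t^2 + s^2 := fun s => by positivity
  have hrpos : ∀ s : ℝ, 0 < r s := fun s => Real.sqrt_pos.2 (hpos s)
  have hr0 : r 0 = t := by simp [hrdef, Real.sqrt_sq ht.le]
  have hr : ∀ s : ℝ, HasDerivAt r (s / r s) s := by
    intro s
    have h1 : HasDerivAt (fun s' : ℝ => t^2 + s'^2) (2*s) s := by
      simpa using ((hasDerivAt_pow 2 s).const_add (t^2))
    have h2 := (Real.hasDerivAt_sqrt (hpos s).ne').comp s h1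
    have h2' : HasDerivAt r (1 / (2 * √(t^2 + s^2)) * (2 * s)) s := h2
    convert h2' using 1
    simp only [hrdef]
    field_simp [hrdef]
  have hrc : ContinuousAt r 0 := (hr 0).continuousAt
  -- g s = deriv u (r s) / r s
  obtain ⟨G, hg⟩ : ∃ G, HasDerivAt (fun s => deriv u (r s) / r s) G 0 := by
    have h1 : HasDerivAt (fun s => deriv u (r s)) (deriv (deriv u) t * (0 / r 0)) 0 := by
      have := (hr0 ▸ hdu.hasDerivAt).comp (0:ℝ) (hr 0)
      simpa [Function.comp_def] using this
    exact ⟨_, h1.div (hr 0) (hr0 ▸ ht.ne')⟩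
  have hmain : HasDerivAt (fun s => (deriv u (r s) / r s) * s) (deriv u t / t) 0 := by
    have := hg.mul (hasDerivAt_id (0:ℝ))
    simpa [hr0, Pi.mul_def] using this
  apply hmain.congr_of_eventuallyEq
  have hev : ∀ᶠ s : ℝ in nhds 0, DifferentiableAt ℝ u (r s) :=
    hrc.eventually (by simpa [hr0] using hu)
  filter_upwards [hev] with s hs
  have hd1 : HasDerivAt (fun s' : ℝ => u (r s')) (deriv u (r s) * (s / r s)) s :=
    hs.hasDerivAt.comp s (hr s)
  rw [hd1.deriv]
  rw [div_mul_eq_mul_div, mul_div_assoc]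

lemma norm_two_single {n : ℕ} (i j : Fin n) (hij : j ≠ i) (a b : ℝ) :
    ‖a • EuclideanSpace.single i (1:ℝ) + b • EuclideanSpace.single j (1:ℝ)‖
      = Real.sqrt (a^2 + b^2) := by
  have horth : inner ℝ (a • EuclideanSpace.single i (1:ℝ)) (b • EuclideanSpace.single j (1:ℝ)) = (0:ℝ) := by
    rw [real_inner_smul_left, real_inner_smul_right, EuclideanSpace.inner_single_left]
    simp [EuclideanSpace.single_apply, hij.symm]
  have h := norm_add_sq_real (a • EuclideanSpace.single i (1:ℝ)) (b • EuclideanSpace.single j (1:ℝ))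
  rw [horth] at h
  have h2 : ‖a • EuclideanSpace.single i (1:ℝ) + b • EuclideanSpace.single j (1:ℝ)‖^2 = a^2 + b^2 := by
    rw [h]
    rw [norm_smul, norm_smul]
    simp [EuclideanSpace.norm_single, mul_pow, sq_abs]
  rw [← h2, Real.sqrt_sq (norm_nonneg _)]

lemma deriv_nonneg_of_monotoneOn {u : ℝ → ℝ} {t d : ℝ} (ht : t ∈ Ioo (0:ℝ) 1)
    (hm : MonotoneOn u (Icc (0:ℝ) 1)) (hd : HasDerivAt u d t) : 0 ≤ d := by
  have h := (hd.hasDerivWithinAt (s := Ioi t))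
  rw [hasDerivWithinAt_iff_tendsto_slope, Set.diff_singleton_eq_self (notMem_Ioi.2 le_rfl)] at h
  refine ge_of_tendsto h ?_
  filter_upwards [Ioc_mem_nhdsGT_of_mem ⟨le_refl t, ht.2⟩] with y hy
  have h1 : u t ≤ u y := hm ⟨ht.1.le, ht.2.le⟩ ⟨ht.1.le.trans hy.1.le, hy.2⟩ hy.1.le
  simpa [slope_def_field] using div_nonneg (sub_nonneg.2 h1) (sub_pos.2 hy.1).le

lemma core (u V : ℝ → ℝ) (A : ℝ) (hA : 0 ≤ A)
    (hVc : ContinuousOn V (Icc 0 1)) (hV0 : ∀ s ∈ Icc (0:ℝ) 1, 0 ≤ V s)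
    (hVint : ∀ t ∈ Icc (0:ℝ) 1, (∫ s in (0:ℝ)..t, V s) ≤ A)
    (hu : ContDiffOn ℝ 2 u (Ioo (-1) 1)) (huc : ContinuousOn u (Icc 0 1))
    (hupos : ∀ t ∈ Icc (0:ℝ) 1, 0 < u t) (humono : MonotoneOn u (Icc 0 1))
    (hu'0 : deriv u 0 = 0)
    (hode : ∀ t ∈ Ico (0:ℝ) 1, deriv (deriv u) t ≤ (1 + V t) * u t) :
    Real.exp (-(1 + A)) * u 1 ≤ u 0 := by
  have hIo : IsOpen (Ioo (-1:ℝ) 1) := isOpen_Ioo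
  have hu1 : ContDiffOn ℝ 1 (deriv u) (Ioo (-1) 1) := hu.deriv_of_isOpen hIo (by norm_num)
  have hu''c : ContinuousOn (deriv (deriv u)) (Ioo (-1) 1) :=
    hu1.continuousOn_deriv_of_isOpen hIo le_rfl
  have hu'd : ∀ s ∈ Ioo (-1:ℝ) 1, HasDerivAt (deriv u) (deriv (deriv u) s) s := by
    intro s hs
    exact (((hu1.differentiableOn (by norm_num)).differentiableAt (hIo.mem_nhds hs))).hasDerivAt
  have hud : ∀ s ∈ Ioo (-1:ℝ) 1, HasDerivAt u (deriv u s) s := by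
    intro s hs
    exact ((hu.differentiableOn (by norm_num)).differentiableAt (hIo.mem_nhds hs)).hasDerivAt
  set K : ℝ := 1 + A with hK
  have hsub : ∀ t ∈ Icc (0:ℝ) 1, t ≠ 1 → Icc (0:ℝ) t ⊆ Ioo (-1:ℝ) 1 := by
    intro t ht ht1 s hs
    exact ⟨by linarith [hs.1], lt_of_le_of_lt hs.2 (lt_of_le_of_ne ht.2 ht1)⟩
  have key : ∀ t ∈ Ioo (0:ℝ) 1, deriv u t ≤ K * u t := by
    intro t ht
    have ht01 : t ∈ Icc (0:ℝ) 1 := ⟨ht.1.le, ht.2.le⟩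
    have hsub' : Icc (0:ℝ) t ⊆ Ioo (-1:ℝ) 1 := hsub t ht01 ht.2.ne
    have hsub'' : Icc (0:ℝ) t ⊆ Icc (0:ℝ) 1 := Icc_subset_Icc le_rfl ht.2.le
    have huIcc : uIcc (0:ℝ) t = Icc 0 t := uIcc_of_le ht.1.le
    have hInt2 : IntervalIntegrable (deriv (deriv u)) MeasureTheory.volume 0 t := by
      apply ContinuousOn.intervalIntegrable
      exact (hu''c.mono hsub').mono (by rw [huIcc])
    have hftc : (∫ s in (0:ℝ)..t, deriv (deriv u) s) = deriv u t - deriv u 0 := by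
      apply integral_eq_sub_of_hasDerivAt
      · intro s hs
        exact hu'd s (hsub' (huIcc ▸ hs))
      · exact hInt2
    have hIntR : IntervalIntegrable (fun s => (1 + V s) * u t) MeasureTheory.volume 0 t := by
      apply ContinuousOn.intervalIntegrable
      apply ContinuousOn.mul _ continuousOn_const
      exact (continuousOn_const.add (hVc.mono hsub'')).mono (by rw [huIcc])
    have hmono2 : (∫ s in (0:ℝ)..t, deriv (deriv u) s) ≤ ∫ s in (0:ℝ)..t, (1 + V s) * u t := by
      apply integral_mono_on ht.1.le hInt2 hIntR
      intro s hs
      have hs01 : s ∈ Icc (0:ℝ) 1 := hsub'' hs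
      have h1 : deriv (deriv u) s ≤ (1 + V s) * u s :=
        hode s ⟨hs.1, lt_of_le_of_lt hs.2 ht.2⟩
      have h2 : u s ≤ u t := humono hs01 ht01 hs.2
      have h3 : 0 ≤ 1 + V s := by linarith [hV0 s hs01]
      nlinarith
    have hIntV : IntervalIntegrable V MeasureTheory.volume 0 t := by
      apply ContinuousOn.intervalIntegrable
      exact (hVc.mono hsub'').mono (by rw [huIcc])
    have hval : (∫ s in (0:ℝ)..t, (1 + V s) * u t) = (t + ∫ s in (0:ℝ)..t, V s) * u t := by
      rw [intervalIntegral.integral_mul_const, intervalIntegral.integral_add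
        intervalIntegrable_const hIntV]
      simp
    have hut : 0 < u t := hupos t ht01
    have hVle : (∫ s in (0:ℝ)..t, V s) ≤ A := hVint t ht01
    have : deriv u t - deriv u 0 ≤ (t + ∫ s in (0:ℝ)..t, V s) * u t := by
      rw [← hftc, ← hval]; exact hmono2
    rw [hu'0, sub_zero] at this
    calc deriv u t ≤ (t + ∫ s in (0:ℝ)..t, V s) * u t := this
      _ ≤ K * u t := by
          apply mul_le_mul_of_nonneg_right _ hut.le
          rw [hK]; linarith [ht.2.le]
  -- the function g
  set g : ℝ → ℝ := fun t => u t * Real.exp (-(K * t)) with hg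
  have hgd : ∀ t ∈ Ioo (0:ℝ) 1,
      HasDerivAt g (deriv u t * Real.exp (-(K*t)) + u t * (Real.exp (-(K*t)) * -K)) t := by
    intro t ht
    have h1 : HasDerivAt u (deriv u t) t := hud t ⟨by linarith [ht.1], ht.2⟩
    have h2 : HasDerivAt (fun t : ℝ => -(K * t)) (-K) t := by
      simpa [Pi.neg_def] using ((hasDerivAt_id t).const_mul K).neg
    exact h1.mul h2.exp
  have hganti : AntitoneOn g (Icc (0:ℝ) 1) := by
    apply antitoneOn_of_deriv_nonpos (convex_Icc 0 1)
    · exact huc.mul (Real.continuous_exp.comp (by fun_prop)).continuousOn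
    · intro t ht
      rw [interior_Icc] at ht
      exact ((hgd t ht).differentiableAt).differentiableWithinAt
    · intro t ht
      rw [interior_Icc] at ht
      rw [(hgd t ht).deriv]
      have h1 : deriv u t ≤ K * u t := key t ht
      have h2 : (0:ℝ) < Real.exp (-(K*t)) := Real.exp_pos _
      nlinarith
  have hfin := hganti (left_mem_Icc.2 zero_le_one) (right_mem_Icc.2 zero_le_one) zero_le_one
  simp only [hg, mul_zero, neg_zero, Real.exp_zero, mul_one, mul_one] at hfin
  calc Real.exp (-(1+A)) * u 1 = u 1 * Real.exp (-K) := by rw [hK]; ring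
    _ ≤ u 0 := hfin

lemma Vbound (β μ lam : ℝ) (hβ : 1 < β) (hμ : 0 ≤ μ) (hlam : 0 < lam) (V : ℝ → ℝ)
    (hVc : ContinuousOn V (Icc 0 1)) (hV0 : ∀ s ∈ Icc (0:ℝ) 1, 0 ≤ V s)
    (hVle : ∀ s ∈ Icc (0:ℝ) 1, V s ≤ μ * lam^(β-1) * (lam+s)^(-β)) :
    ∀ t ∈ Icc (0:ℝ) 1, (∫ s in (0:ℝ)..t, V s) ≤ μ/(β-1) := by
  intro t ht
  set W : ℝ → ℝ := fun s => μ * lam^(β-1) * (lam+s)^(-β) with hW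
  have hbpos : ∀ s : ℝ, 0 ≤ s → 0 < lam + s := fun s hs => by linarith
  have hWc : ContinuousOn W (Icc 0 t) := by
    apply continuousOn_const.mul
    intro s hs
    apply ContinuousWithinAt.rpow_const
    · exact (continuous_const.add continuous_id).continuousWithinAt
    · exact Or.inl (hbpos s hs.1).ne'
  have huIcc : uIcc (0:ℝ) t = Icc 0 t := uIcc_of_le ht.1
  have hsub : Icc (0:ℝ) t ⊆ Icc 0 1 := Icc_subset_Icc le_rfl ht.2
  have hIntV : IntervalIntegrable V MeasureTheory.volume 0 t :=
    ContinuousOn.intervalIntegrable ((hVc.mono hsub).mono (by rw [huIcc]))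
  have hIntW : IntervalIntegrable W MeasureTheory.volume 0 t :=
    ContinuousOn.intervalIntegrable (hWc.mono (by rw [huIcc]))
  have hmono : (∫ s in (0:ℝ)..t, V s) ≤ ∫ s in (0:ℝ)..t, W s :=
    integral_mono_on ht.1 hIntV hIntW (fun s hs => hVle s (hsub hs))
  -- compute ∫ W via antiderivative
  set F : ℝ → ℝ := fun s => μ * lam^(β-1) * ((lam+s)^(1-β) / (1-β)) with hF
  have hFd : ∀ s ∈ Icc (0:ℝ) t, HasDerivAt F (W s) s := by
    intro s hs
    have hb := hbpos s hs.1
    have h1 : HasDerivAt (fun s : ℝ => lam + s) 1 s := by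
      simpa using (hasDerivAt_id s).const_add lam
    have h2 : HasDerivAt (fun x : ℝ => x^(1-β)) ((1-β) * (lam+s)^(1-β-1)) (lam+s) :=
      Real.hasDerivAt_rpow_const (Or.inl hb.ne')
    have h4 : HasDerivAt F (μ * lam^(β-1) * (((1-β) * (lam+s)^(1-β-1) * 1) / (1-β))) s :=
      ((h2.comp s h1).div_const (1-β)).const_mul (μ * lam^(β-1))
    have he : (1:ℝ)-β-1 = -β := by ring
    have hβ1 : (1:ℝ)-β ≠ 0 := by linarith
    have hval : μ * lam^(β-1) * (((1-β) * (lam+s)^(1-β-1) * 1) / (1-β)) = W s := by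
      rw [he]; simp only [hW]; field_simp
    rw [← hval]; exact h4
  have hWint : (∫ s in (0:ℝ)..t, W s) = F t - F 0 := by
    apply integral_eq_sub_of_hasDerivAt
    · intro s hs; exact hFd s (huIcc ▸ hs)
    · exact hIntW
  have hfin : F t - F 0 ≤ μ/(β-1) := by
    have hlt : (0:ℝ) ≤ (lam+t)^(1-β) := Real.rpow_nonneg (hbpos t ht.1).le _
    have hprod : μ * lam^(β-1) * lam^(1-β) = μ := by
      rw [mul_assoc, ← Real.rpow_add hlam]; norm_num
    have hne1 : (1:ℝ)-β ≠ 0 := by linarith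
    have hne2 : β-1 ≠ 0 := by linarith
    have hβ1 : (0:ℝ) < β - 1 := by linarith
    simp only [hF, add_zero]
    have hexp : μ * lam ^ (β - 1) * ((lam + t) ^ (1 - β) / (1 - β))
        - μ * lam ^ (β - 1) * (lam ^ (1 - β) / (1 - β))
        = (μ * lam^(β-1) * lam^(1-β) - μ * lam^(β-1) * (lam+t)^(1-β))/(β-1) := by
      field_simp
      ring
    rw [hexp, hprod]
    have hX : 0 ≤ μ * lam^(β-1) * (lam+t)^(1-β) := by positivity
    exact (div_le_div_iff_of_pos_right hβ1).mpr (by linarith)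
  linarith [hmono, hWint ▸ hfin]

/-- The Laplacian of `f : ℝⁿ → ℝ`, as the sum of the second partial derivatives. -/
noncomputable def lap {n : ℕ} (f : Eucl n → ℝ) (x : Eucl n) : ℝ :=
  ∑ i : Fin n, fderiv ℝ (fun y => fderiv ℝ f y (EuclideanSpace.single i 1)) x
    (EuclideanSpace.single i 1)

/-- Uniform lower bound for the rescaled Dirichlet eigenfunctions
`Δf_λ − λ^{−1}D(x/λ)f_λ = f_λ` on `B₁`, `f_λ = 1` on `∂B₁`: there is `c > 0` with
`f_λ ≥ c` on `B₁` uniformly in `λ ∈ (0,1]`; in particular `liminf_{λ→0⁺} f_λ(0) > 0`. -/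
theorem dirichlet_family_uniform_lower_bound
    (n : ℕ) (hn : 2 ≤ n) (β μ : ℝ) (hβ : 1 < β) (hμ : 0 ≤ μ)
    (D : Eucl n → ℝ) (hDc : Continuous D)
    (hDholder : ∃ (δ Ch : ℝ≥0), 0 < δ ∧ HolderOnWith Ch δ D (Metric.ball 0 δ))
    (hDrad : ∀ x y : Eucl n, ‖x‖ = ‖y‖ → D x = D y)
    (hD0 : ∀ x, 0 ≤ D x) (hDle : ∀ x, D x ≤ μ * (1 + ‖x‖) ^ (-β))
    (f : ℝ → Eucl n → ℝ)
    (hfC2 : ∀ lam ∈ Ioc (0 : ℝ) 1, ContDiffOn ℝ 2 (f lam) (Metric.closedBall 0 1))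
    (hfeq : ∀ lam ∈ Ioc (0 : ℝ) 1, ∀ x ∈ Metric.ball (0 : Eucl n) 1,
      lap (f lam) x - lam⁻¹ * D ((lam⁻¹ : ℝ) • x) * f lam x = f lam x)
    (hfbd : ∀ lam ∈ Ioc (0 : ℝ) 1, ∀ x ∈ Metric.sphere (0 : Eucl n) 1, f lam x = 1)
    (hfrad : ∀ lam ∈ Ioc (0 : ℝ) 1, ∀ x y : Eucl n, ‖x‖ = ‖y‖ → f lam x = f lam y)
    (hfpos : ∀ lam ∈ Ioc (0 : ℝ) 1, ∀ x ∈ Metric.closedBall (0 : Eucl n) 1,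
      0 < f lam x ∧ f lam x ≤ 1)
    (hfmono : ∀ lam ∈ Ioc (0 : ℝ) 1, ∀ x ∈ Metric.closedBall (0 : Eucl n) 1,
      ∀ y ∈ Metric.closedBall (0 : Eucl n) 1, ‖x‖ ≤ ‖y‖ → f lam x ≤ f lam y) :
    ∃ c > (0 : ℝ),
      (∀ lam ∈ Ioc (0 : ℝ) 1, ∀ x ∈ Metric.closedBall (0 : Eucl n) 1, c ≤ f lam x) ∧
      0 < Filter.liminf (fun lam : ℝ => f lam 0) (nhdsWithin 0 (Ioi 0)) := by
  haveI : NeZero n := ⟨by omega⟩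
  set A : ℝ := μ / (β - 1) with hA
  have hA0 : 0 ≤ A := div_nonneg hμ (by linarith)
  set c : ℝ := Real.exp (-(1 + A)) with hc
  have hc0 : 0 < c := Real.exp_pos _
  set e0 : Eucl n := EuclideanSpace.single (0 : Fin n) (1:ℝ) with he0def
  have he0 : ‖e0‖ = 1 := by simp [he0def]
  have hnsmul : ∀ t : ℝ, ‖t • e0‖ = |t| := by
    intro t; rw [norm_smul, he0, mul_one]; rfl
  -- main uniform bound
  have hmain : ∀ lam ∈ Ioc (0 : ℝ) 1, ∀ x ∈ Metric.closedBall (0 : Eucl n) 1, c ≤ f lam x := by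
    intro lam hlam
    have hl0 : 0 < lam := hlam.1
    set u : ℝ → ℝ := fun t => f lam (t • e0) with hu
    set V : ℝ → ℝ := fun s => lam⁻¹ * D ((lam⁻¹ * s) • e0) with hV
    -- membership facts
    have hmemc : ∀ t : ℝ, |t| ≤ 1 → t • e0 ∈ Metric.closedBall (0 : Eucl n) 1 := by
      intro t ht
      rw [Metric.mem_closedBall, dist_zero_right, hnsmul]; exact ht
    have hmemb : ∀ t : ℝ, |t| < 1 → t • e0 ∈ Metric.ball (0 : Eucl n) 1 := by
      intro t ht
      rw [Metric.mem_ball, dist_zero_right, hnsmul]; exact ht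
    -- radial representation
    have hradu : ∀ x : Eucl n, f lam x = u ‖x‖ := by
      intro x
      apply hfrad lam hlam
      rw [hnsmul, abs_of_nonneg (norm_nonneg x)]
    -- smoothness of u
    have hsm : ContDiff ℝ 2 (fun t : ℝ => t • e0) := contDiff_id.smul contDiff_const
    have huC2 : ContDiffOn ℝ 2 u (Ioo (-1:ℝ) 1) := by
      apply (hfC2 lam hlam).comp (hsm.contDiffOn)
      intro t ht
      exact hmemc t (abs_lt.2 ⟨ht.1, ht.2⟩).le
    have hIo : IsOpen (Ioo (-1:ℝ) 1) := isOpen_Ioo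
    have huC1' : ContDiffOn ℝ 1 (deriv u) (Ioo (-1:ℝ) 1) := huC2.deriv_of_isOpen hIo (by norm_num)
    have hu'd : ∀ t ∈ Ioo (-1:ℝ) 1, HasDerivAt (deriv u) (deriv (deriv u) t) t := fun t ht =>
      ((huC1'.differentiableOn (by norm_num)).differentiableAt (hIo.mem_nhds ht)).hasDerivAt
    have hud : ∀ t ∈ Ioo (-1:ℝ) 1, HasDerivAt u (deriv u t) t := fun t ht =>
      ((huC2.differentiableOn (by norm_num)).differentiableAt (hIo.mem_nhds ht)).hasDerivAt
    have hevd : ∀ t ∈ Ioo (-1:ℝ) 1, ∀ᶠ r in nhds t, DifferentiableAt ℝ u r := by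
      intro t ht
      filter_upwards [hIo.mem_nhds ht] with r hr
      exact (hud r hr).differentiableAt
    -- C² of f at interior points
    have hfx : ∀ t : ℝ, |t| < 1 → ContDiffAt ℝ 2 (f lam) (t • e0) := by
      intro t ht
      apply (hfC2 lam hlam).contDiffAt
      exact Filter.mem_of_superset (Metric.isOpen_ball.mem_nhds (hmemb t ht))
        Metric.ball_subset_closedBall
    -- the PDE in terms of u and V
    have hpde : ∀ t : ℝ, 0 ≤ t → t < 1 → lap (f lam) (t • e0) = (1 + V t) * u t := by
      intro t ht0 ht1
      have hb : t • e0 ∈ Metric.ball (0 : Eucl n) 1 := hmemb t (by rw [abs_of_nonneg ht0]; exact ht1)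
      have h := hfeq lam hlam (t • e0) hb
      have hsc : (lam⁻¹ : ℝ) • (t • e0) = (lam⁻¹ * t) • e0 := smul_smul _ _ _
      rw [hsc] at h
      have : f lam ((lam⁻¹ * t) • e0) = f lam ((lam⁻¹ * t) • e0) := rfl
      simp only [hu, hV]
      linarith [h]
    -- second derivative identities
    have hT0 : ∀ t : ℝ, 0 ≤ t → t < 1 →
        fderiv ℝ (fun y => fderiv ℝ (f lam) y e0) (t • e0) e0 = deriv (deriv u) t := by
      intro t ht0 ht1
      have htIoo : t ∈ Ioo (-1:ℝ) 1 := ⟨by linarith, ht1⟩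
      have h1 := second_dir (f lam) (t • e0) e0 (hfx t (by rw [abs_of_nonneg ht0]; exact ht1))
      have hfun : (fun r : ℝ => f lam (t • e0 + r • e0)) = (fun r : ℝ => u (t + r)) := by
        funext r
        rw [← add_smul]
      rw [hfun] at h1
      exact h1.unique (lemD u t _ (hevd t htIoo) (hu'd t htIoo))
    have hTi : ∀ t : ℝ, 0 < t → t < 1 → ∀ i : Fin n, i ≠ 0 →
        fderiv ℝ (fun y => fderiv ℝ (f lam) y (EuclideanSpace.single i 1)) (t • e0)
          (EuclideanSpace.single i 1) = deriv u t / t := by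
      intro t ht0 ht1 i hi
      have htIoo : t ∈ Ioo (-1:ℝ) 1 := ⟨by linarith, ht1⟩
      have h1 := second_dir (f lam) (t • e0) (EuclideanSpace.single i 1)
        (hfx t (by rw [abs_of_nonneg ht0.le]; exact ht1))
      have hfun : (fun r : ℝ => f lam (t • e0 + r • EuclideanSpace.single i 1))
          = (fun r : ℝ => u (Real.sqrt (t^2 + r^2))) := by
        funext r
        rw [hradu (t • e0 + r • EuclideanSpace.single i 1)]
        congr 1
        rw [he0def]
        exact norm_two_single (0 : Fin n) i hi t r
      rw [hfun] at h1
      exact h1.unique (lemC u t ht0 (hevd t htIoo) (hu'd t htIoo).differentiableAt)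
    have hT00 : ∀ i : Fin n,
        fderiv ℝ (fun y => fderiv ℝ (f lam) y (EuclideanSpace.single i 1)) ((0:ℝ) • e0)
          (EuclideanSpace.single i 1) = deriv (deriv u) 0 := by
      intro i
      have h0Ioo : (0:ℝ) ∈ Ioo (-1:ℝ) 1 := by norm_num
      have h1 := second_dir (f lam) ((0:ℝ) • e0) (EuclideanSpace.single i 1)
        (hfx 0 (by norm_num))
      have hfun : (fun r : ℝ => f lam ((0:ℝ) • e0 + r • EuclideanSpace.single i 1))
          = (fun r : ℝ => u (0 + r)) := by
        funext r
        rw [zero_smul, zero_add, zero_add]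
        apply hfrad lam hlam
        simp [norm_smul, he0def]
      rw [hfun] at h1
      exact h1.unique (lemD u 0 _ (hevd 0 h0Ioo) (hu'd 0 h0Ioo))
    -- ODE inequality
    have hode : ∀ t ∈ Ico (0:ℝ) 1, deriv (deriv u) t ≤ (1 + V t) * u t := by
      intro t ht
      have hut : 0 < u t := (hfpos lam hlam _ (hmemc t (by rw [abs_of_nonneg ht.1]; linarith [ht.2]))).1
      have hVt : 0 ≤ V t := by
        rw [hV]
        exact mul_nonneg (by positivity) (hD0 _)
      have hrhs : 0 ≤ (1 + V t) * u t := by nlinarith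
      rcases eq_or_lt_of_le ht.1 with h0 | h0
      · -- t = 0
        have heq : ((n:ℝ)) * deriv (deriv u) 0 = (1 + V 0) * u 0 := by
          have hl := hpde 0 le_rfl one_pos
          rw [lap] at hl
          rw [Finset.sum_congr rfl (fun i _ => hT00 i)] at hl
          rw [Finset.sum_const, Finset.card_univ, Fintype.card_fin, nsmul_eq_mul] at hl
          exact hl
        have hn1 : (1:ℝ) ≤ (n:ℝ) := by exact_mod_cast (by omega : 1 ≤ n)
        have hnne : (n:ℝ) ≠ 0 := by positivity
        have hdd : deriv (deriv u) 0 = ((1 + V 0) * u 0) / n := by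
          field_simp
          linarith [heq]
        rw [← h0, hdd]
        rw [← h0] at hrhs
        exact div_le_self hrhs hn1
      · -- t > 0
        have hu't : 0 ≤ deriv u t :=
          deriv_nonneg_of_monotoneOn ⟨h0, ht.2⟩ (by
            intro a ha b hb hab
            apply hfmono lam hlam _ (hmemc a (by rw [abs_of_nonneg ha.1]; exact ha.2))
              _ (hmemc b (by rw [abs_of_nonneg hb.1]; exact hb.2))
            rw [hnsmul, hnsmul, abs_of_nonneg ha.1, abs_of_nonneg hb.1]
            exact hab) (hud t ⟨by linarith, ht.2⟩)
        have heq : deriv (deriv u) t + ((n-1 : ℕ) : ℝ) * (deriv u t / t) = (1 + V t) * u t := by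
          have hl := hpde t ht.1 ht.2
          rw [lap] at hl
          rw [← Finset.sum_erase_add Finset.univ _ (Finset.mem_univ (0 : Fin n))] at hl
          rw [Finset.sum_congr rfl (fun i hi => hTi t h0 ht.2 i (Finset.ne_of_mem_erase hi))] at hl
          rw [Finset.sum_const, Finset.card_erase_of_mem (Finset.mem_univ _), Finset.card_univ,
            Fintype.card_fin, nsmul_eq_mul] at hl
          have h2 : fderiv ℝ (fun y => fderiv ℝ (f lam) y (EuclideanSpace.single (0:Fin n) 1))
              (t • e0) (EuclideanSpace.single (0:Fin n) 1) = deriv (deriv u) t := by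
            rw [← he0def]
            exact hT0 t ht.1 ht.2
          rw [h2] at hl
          linarith [hl]
        have hge : 0 ≤ ((n-1 : ℕ) : ℝ) * (deriv u t / t) :=
          mul_nonneg (Nat.cast_nonneg _) (div_nonneg hu't (le_of_lt h0))
        linarith
    -- hypotheses of core
    have huc : ContinuousOn u (Icc (0:ℝ) 1) := by
      apply ContinuousOn.comp ((hfC2 lam hlam).continuousOn) (hsm.continuous.continuousOn)
      intro t ht
      exact hmemc t (abs_le.2 ⟨by linarith [ht.1], ht.2⟩)
    have hupos : ∀ t ∈ Icc (0:ℝ) 1, 0 < u t := fun t ht =>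
      (hfpos lam hlam _ (hmemc t (abs_le.2 ⟨by linarith [ht.1], ht.2⟩))).1
    have humono : MonotoneOn u (Icc (0:ℝ) 1) := by
      intro a ha b hb hab
      apply hfmono lam hlam _ (hmemc a (abs_le.2 ⟨by linarith [ha.1], ha.2⟩))
        _ (hmemc b (abs_le.2 ⟨by linarith [hb.1], hb.2⟩))
      rw [hnsmul, hnsmul, abs_of_nonneg ha.1, abs_of_nonneg hb.1]
      exact hab
    have hu'0 : deriv u 0 = 0 := by
      have heven : (fun t : ℝ => u (-t)) = u := by
        funext t
        apply hfrad lam hlam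
        rw [hnsmul, hnsmul, abs_neg]
      have h := deriv_comp_neg u (0:ℝ)
      rw [heven, neg_zero] at h
      linarith
    have hVc : ContinuousOn V (Icc 0 1) := by
      apply Continuous.continuousOn
      apply continuous_const.mul
      exact hDc.comp ((continuous_const.mul continuous_id).smul continuous_const)
    have hV0 : ∀ s ∈ Icc (0:ℝ) 1, 0 ≤ V s := fun s _ =>
      mul_nonneg (by positivity) (hD0 _)
    have hVle : ∀ s ∈ Icc (0:ℝ) 1, V s ≤ μ * lam^(β-1) * (lam+s)^(-β) := by
      intro s hs
      have hls : (0:ℝ) < lam + s := by linarith [hs.1]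
      have h1 : D ((lam⁻¹ * s) • e0) ≤ μ * (1 + ‖(lam⁻¹ * s) • e0‖) ^ (-β) := hDle _
      rw [hnsmul, abs_of_nonneg (mul_nonneg (inv_nonneg.2 hl0.le) hs.1)] at h1
      have h2 : (1 : ℝ) + lam⁻¹ * s = (lam + s)/lam := by field_simp
      rw [h2] at h1
      have h3 : ((lam + s)/lam) ^ (-β) = (lam+s)^(-β) / lam^(-β) :=
        Real.div_rpow hls.le hl0.le ..
      have h4 : lam⁻¹ * (μ * ((lam+s)^(-β) / lam^(-β))) = μ * lam^(β-1) * (lam+s)^(-β) := by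
        have hlb : lam^(-β) = (lam^β)⁻¹ := Real.rpow_neg hl0.le β
        have hlb2 : lam^(β-1) = lam^β / lam := by rw [Real.rpow_sub hl0, Real.rpow_one]
        have hlbp : (0:ℝ) < lam^β := Real.rpow_pos_of_pos hl0 β
        rw [hlb, hlb2]
        field_simp
      calc V s ≤ lam⁻¹ * (μ * ((lam+s)^(-β) / lam^(-β))) := by
            rw [hV, ← h3]
            exact mul_le_mul_of_nonneg_left h1 (by positivity)
        _ = μ * lam^(β-1) * (lam+s)^(-β) := h4
    have hVint := Vbound β μ lam hβ hμ hl0 V hVc hV0 hVle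
    -- apply core
    have hcore := core u V A hA0 hVc hV0 hVint huC2 huc hupos humono hu'0 hode
    have hu1 : u 1 = 1 := by
      rw [hu]
      apply hfbd lam hlam
      rw [mem_sphere_iff_norm, sub_zero, hnsmul, abs_one]
    rw [hu1, mul_one, ← hc] at hcore
    -- conclude
    intro x hx
    have h0 : f lam 0 ≤ f lam x := by
      apply hfmono lam hlam 0 (Metric.mem_closedBall_self zero_le_one) x hx
      simp
    have hu0 : u 0 = f lam 0 := by
      show f lam ((0:ℝ) • e0) = f lam 0
      rw [zero_smul]
    rw [hu0] at hcore
    linarith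
  refine ⟨c, hc0, hmain, ?_⟩
  have hev1 : ∀ᶠ lam in nhdsWithin (0:ℝ) (Ioi 0), c ≤ f lam 0 := by
    filter_upwards [Ioc_mem_nhdsGT_of_mem (by norm_num : (0:ℝ) ∈ Ico (0:ℝ) 1)] with lam hlam
    exact hmain lam hlam 0 (Metric.mem_closedBall_self zero_le_one)
  have hbd : Filter.IsCoboundedUnder (· ≥ ·) (nhdsWithin (0:ℝ) (Ioi 0)) (fun lam => f lam 0) := by
    apply Filter.IsBoundedUnder.isCoboundedUnder_ge
    apply Filter.isBoundedUnder_of_eventually_le (a := (1:ℝ))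
    filter_upwards [Ioc_mem_nhdsGT_of_mem (by norm_num : (0:ℝ) ∈ Ico (0:ℝ) 1)] with lam hlam
    exact (hfpos lam hlam 0 (Metric.mem_closedBall_self zero_le_one)).2
  exact lt_of_lt_of_le hc0 (Filter.le_liminf_of_le hbd hev1)
end
end

section
/- Let n ≥ 2, d_∞ ∈ ℝ and v_∞ ≥ 0, and set ρ(v_∞) = √(((n−2)/2)² + v_∞) − (n−2)/2, p₃ = (n+ρ(v_∞))/(n+ρ(v_∞)−1), γ(p,m) = 2 + (m+1)p − (m−1)p², γ₂(p) = 2(n+ρ(v_∞)−1)(p−p₃) + γ(p, n+d_∞), and let p₅ be the positive root of γ₂(p) = 0 when n+d_∞ > 1 (explicitly p₅ = (3n+d_∞+2ρ(v_∞)−1+√((3n+d_∞+2ρ(v_∞)−1)²−8(n+d_∞−1)(n+ρ(v_∞)−1)))/(2(n+d_∞−1))) and p₅ = ∞ when n+d_∞ ≤ 1. Let p_S(m) be the positive root of γ(p,m) = 0 for m > 1 and ∞ for m ≤ 1, and p_G(m) = 1 + 2/(m−1) for m > 1 and ∞ for m ≤ 1. Then min(p₃, p₅) < max(p_S(n+d_∞),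 p_G(n+ρ(v_∞))). -/
open MeasureTheory Set Real Filter

noncomputable section

/-- `ρ(v) = √(((n−2)/2)² + v) − (n−2)/2`. -/
noncomputable def rho (n : ℕ) (v : ℝ) : ℝ :=
  Real.sqrt ((((n : ℝ) - 2) / 2) ^ 2 + v) - ((n : ℝ) - 2) / 2

/-- The quadratic `γ(p,m) = 2 + (m+1)p - (m-1)p²`. -/
def gam (p m : ℝ) : ℝ := 2 + (m + 1) * p - (m - 1) * p ^ 2

/-- The Strauss exponent `p_S(m)`, valued in the extended reals (`∞` for `m ≤ 1`). -/
noncomputable def pS (m : ℝ) : EReal :=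
  if 1 < m then (((m + 1 + Real.sqrt (m ^ 2 + 10 * m - 7)) / (2 * (m - 1)) : ℝ) : EReal) else ⊤

/-- The Glassey-type exponent `p_G(m)`, valued in the extended reals (`∞` for `m ≤ 1`). -/
noncomputable def pG (m : ℝ) : EReal :=
  if 1 < m then ((1 + 2 / (m - 1) : ℝ) : EReal) else ⊤

/-- One always has `min(p₃, p₅) < p_c = max(p_S(n+d_∞), p_G(n+ρ(v_∞)))`. -/
theorem min_p3_p5_lt_pc
    (n : ℕ) (hn : 2 ≤ n) (d_inf v_inf : ℝ) (hv : 0 ≤ v_inf)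
    (p3 : ℝ) (p5 : EReal)
    (hp3 : p3 = ((n : ℝ) + rho n v_inf) / ((n : ℝ) + rho n v_inf - 1))
    (hp5 : p5 = if 1 < (n : ℝ) + d_inf then
      (((3 * (n : ℝ) + d_inf + 2 * rho n v_inf - 1 +
        Real.sqrt ((3 * (n : ℝ) + d_inf + 2 * rho n v_inf - 1) ^ 2 -
          8 * ((n : ℝ) + d_inf - 1) * ((n : ℝ) + rho n v_inf - 1))) /
        (2 * ((n : ℝ) + d_inf - 1)) : ℝ) : EReal) else ⊤) :
    min ((p3 : ℝ) : EReal) p5 < max (pS ((n : ℝ) + d_inf)) (pG ((n : ℝ) + rho n v_inf)) := by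
  set m : ℝ := (n : ℝ) + rho n v_inf with hm
  have hrho : 0 ≤ rho n v_inf := by
    have h2 : (0:ℝ) ≤ ((n : ℝ) - 2) / 2 := by
      have : (2:ℝ) ≤ (n:ℝ) := by exact_mod_cast hn
      linarith
    have := Real.sqrt_le_sqrt (show (((n : ℝ) - 2) / 2) ^ 2 ≤ (((n : ℝ) - 2) / 2) ^ 2 + v_inf by linarith)
    rw [Real.sqrt_sq h2] at this
    simp only [rho]; linarith
  have hm1 : 1 < m := by
    have : (2:ℝ) ≤ (n:ℝ) := by exact_mod_cast hn
    simp only [hm]; linarith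
  have hpos : 0 < m - 1 := by linarith
  have hlt : p3 < 1 + 2 / (m - 1) := by
    rw [hp3]
    rw [div_lt_iff₀ hpos] at *
    have h2 : (1 + 2 / (m - 1)) * (m - 1) = m + 1 := by
      field_simp; ring
    rw [h2]
    linarith
  have hpG : pG m = ((1 + 2 / (m - 1) : ℝ) : EReal) := by
    simp [pG, hm1]
  calc min ((p3 : ℝ) : EReal) p5 ≤ ((p3 : ℝ) : EReal) := min_le_left _ _
    _ < pG m := by rw [hpG]; exact_mod_cast hlt
    _ ≤ max (pS ((n : ℝ) + d_inf)) (pG m) := le_max_right _ _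
end
end
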